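/- arXiv:2508.20938 — 2 statements merged into one kernel-verified Lean document; each statement's English description precedes it below -/
import Mathlib

section
/- For each integer k, the k-th Fourier coefficient of t ↦ cos(ωt)|cos(ωt)| on the torus ℝ/TZ vanishes for even k, and equals 4(-1)^n/((4k - k³)π) for odd k = 2n+1. Here the coefficient is (1/T)∫_0^T cos(ωt)|cos(ωt)| e^{-iωkt} dt with ω = 2π/T. -/
open MeasureTheory intervalIntegral Real

private lemma aux_even (T : ℝ) (hT : 0 < T) (k : ℤ) (hk : Even k) :
    (1 / T : ℂ) * ∫ t in (0:ℝ)..T,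
        ((Real.cos (2 * Real.pi / T * t) * |Real.cos (2 * Real.pi / T * t)| : ℝ) : ℂ) *
          Complex.exp (-(Complex.I * ((2 * Real.pi / T : ℝ) : ℂ) * (k : ℂ) * (t : ℝ))) = 0 := by
  obtain ⟨m, hm⟩ := hk
  set ω : ℝ := 2 * Real.pi / T with hω
  have hTne : T ≠ 0 := ne_of_gt hT
  have hωT : ω * T = 2 * Real.pi := by rw [hω]; field_simp
  have hωTC : (ω : ℂ) * (T : ℂ) = 2 * (Real.pi : ℂ) := by exact_mod_cast hωT
  set g : ℝ → ℂ := fun t => ((Real.cos (ω * t) * |Real.cos (ω * t)| : ℝ) : ℂ) *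
          Complex.exp (-(Complex.I * (ω : ℂ) * (k : ℂ) * (t : ℝ))) with hg
  have hcont : Continuous g := by
    apply Continuous.mul
    · exact Complex.continuous_ofReal.comp
        ((Real.continuous_cos.comp (continuous_const.mul continuous_id)).mul
          (Real.continuous_cos.comp (continuous_const.mul continuous_id)).abs)
    · exact Complex.continuous_exp.comp
        (((continuous_const.mul Complex.continuous_ofReal)).neg)
  have key : ∀ t : ℝ, g (t + T / 2) = -g t := by
    intro t
    have h1 : ω * (t + T / 2) = ω * t + Real.pi := by
      have h2 : ω * (T / 2) = Real.pi := by rw [hω]; field_simp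
      rw [mul_add, h2]
    have hexp : Complex.exp (-(Complex.I * (ω : ℂ) * (k : ℂ) * ((t + T/2 : ℝ) : ℂ)))
        = Complex.exp (-(Complex.I * (ω : ℂ) * (k : ℂ) * (t : ℝ))) := by
      rw [show (-(Complex.I * (ω : ℂ) * (k : ℂ) * ((t + T/2 : ℝ) : ℂ)))
          = -(Complex.I * (ω : ℂ) * (k : ℂ) * (t : ℝ)) + (-m : ℤ) * (2 * (Real.pi : ℂ) * Complex.I) from by
        push_cast [hm]
        linear_combination (-Complex.I * (m : ℂ)) * hωTC]
      rw [Complex.exp_add, Complex.exp_int_mul_two_pi_mul_I, mul_one]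
    simp only [hg]
    rw [h1, Real.cos_add_pi, abs_neg, hexp]
    push_cast
    ring
  have h1 : IntervalIntegrable g volume 0 (T/2) := hcont.intervalIntegrable _ _
  have h2 : IntervalIntegrable g volume (T/2) T := hcont.intervalIntegrable _ _
  have e2 : ∫ t in (0:ℝ)..(T/2), g (t + T/2) = ∫ t in (T/2)..T, g t := by
    rw [intervalIntegral.integral_comp_add_right g (T/2)]
    congr 1 <;> ring
  have hI0 : (∫ t in (0:ℝ)..T, g t) = 0 := by
    rw [← integral_add_adjacent_intervals h1 h2, ← e2]
    have h3 : (∫ t in (0:ℝ)..(T/2), g (t + T/2)) = ∫ t in (0:ℝ)..(T/2), -g t :=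
      integral_congr fun t _ => key t
    rw [h3, intervalIntegral.integral_neg]
    ring
  rw [hI0, mul_zero]


set_option maxHeartbeats 2000000 in
private lemma aux_odd (T : ℝ) (hT : 0 < T) (k n : ℤ) (hkn : k = 2 * n + 1) :
    (1 / T : ℂ) * ∫ t in (0:ℝ)..T,
        ((Real.cos (2 * Real.pi / T * t) * |Real.cos (2 * Real.pi / T * t)| : ℝ) : ℂ) *
          Complex.exp (-(Complex.I * ((2 * Real.pi / T : ℝ) : ℂ) * (k : ℂ) * (t : ℝ)))
      = 4 * (-1 : ℂ)^n / ((4 * (k : ℂ) - (k : ℂ)^3) * (Real.pi : ℂ)) := by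
  set ω : ℝ := 2 * Real.pi / T with hω
  have hTne : T ≠ 0 := ne_of_gt hT
  have hTC : (T : ℂ) ≠ 0 := by exact_mod_cast hTne
  have hπC : (Real.pi : ℂ) ≠ 0 := by exact_mod_cast Real.pi_ne_zero
  have hωpos : 0 < ω := by rw [hω]; positivity
  have hωT : ω * T = 2 * Real.pi := by rw [hω]; field_simp
  have hωTC : (ω : ℂ) * (T : ℂ) = 2 * (Real.pi : ℂ) := by exact_mod_cast hωT
  have hωCval : (ω : ℂ) = 2 * (Real.pi : ℂ) / T := by rw [hω]; push_cast; ring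
  have hωC : (ω : ℂ) ≠ 0 := Complex.ofReal_ne_zero.mpr (ne_of_gt hωpos)
  -- integer nonvanishing
  have hk0 : (k : ℂ) ≠ 0 := Int.cast_ne_zero.mpr (by omega)
  have h2mk : (2 : ℂ) - (k : ℂ) ≠ 0 := by
    have : ((2 - k : ℤ) : ℂ) ≠ 0 := Int.cast_ne_zero.mpr (by omega)
    push_cast at this; exact this
  have h2pk : (2 : ℂ) + (k : ℂ) ≠ 0 := by
    have : ((2 + k : ℤ) : ℂ) ≠ 0 := Int.cast_ne_zero.mpr (by omega)
    push_cast at this; exact this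
  -- the three exponents
  set c₁ : ℂ := Complex.I * (((2 : ℂ) - (k : ℂ)) * (ω : ℂ)) with hc₁
  set c₂ : ℂ := Complex.I * ((-(k : ℂ)) * (ω : ℂ)) with hc₂
  set c₃ : ℂ := Complex.I * ((-((2 : ℂ) + (k : ℂ))) * (ω : ℂ)) with hc₃
  have hc₁0 : c₁ ≠ 0 := mul_ne_zero Complex.I_ne_zero (mul_ne_zero h2mk hωC)
  have hc₂0 : c₂ ≠ 0 := mul_ne_zero Complex.I_ne_zero (mul_ne_zero (neg_ne_zero.mpr hk0) hωC)
  have hc₃0 : c₃ ≠ 0 := mul_ne_zero Complex.I_ne_zero (mul_ne_zero (neg_ne_zero.mpr h2pk) hωC)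
  -- pointwise decomposition of cos² * exp into exponentials
  have hpt : ∀ t : ℝ, ((Real.cos (ω * t) ^ 2 : ℝ) : ℂ) *
      Complex.exp (-(Complex.I * (ω : ℂ) * (k : ℂ) * (t : ℝ)))
      = (1/4 : ℂ) * (Complex.exp (c₁ * t) + 2 * Complex.exp (c₂ * t) + Complex.exp (c₃ * t)) := by
    intro t
    set A : ℂ := Complex.exp (Complex.I * (ω : ℂ) * (t : ℝ)) with hA
    set B : ℂ := Complex.exp (-(Complex.I * (ω : ℂ) * (t : ℝ))) with hB
    set E : ℂ := Complex.exp (c₂ * t) with hE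
    have hAB : A * B = 1 := by
      rw [hA, hB, ← Complex.exp_add, add_neg_cancel, Complex.exp_zero]
    have hcos : ((Real.cos (ω * t) : ℝ) : ℂ) = (A + B) / 2 := by
      rw [Complex.ofReal_cos]
      have h2c := Complex.two_cos (x := ((ω * t : ℝ) : ℂ))
      have eA : Complex.exp (((ω * t : ℝ) : ℂ) * Complex.I) = A := by
        rw [hA]; congr 1; push_cast; ring
      have eB : Complex.exp (-((ω * t : ℝ) : ℂ) * Complex.I) = B := by
        rw [hB]; congr 1; push_cast; ring
      rw [eA, eB] at h2c
      linear_combination h2c / 2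
    have hE2 : Complex.exp (-(Complex.I * (ω : ℂ) * (k : ℂ) * (t : ℝ))) = E := by
      rw [hE]; congr 1; rw [hc₂]; push_cast; ring
    have h1 : Complex.exp (c₁ * t) = A * A * E := by
      rw [hA, hE, ← Complex.exp_add, ← Complex.exp_add]
      congr 1; rw [hc₁, hc₂]; push_cast; ring
    have h3 : Complex.exp (c₃ * t) = B * B * E := by
      rw [hB, hE, ← Complex.exp_add, ← Complex.exp_add]
      congr 1; rw [hc₃, hc₂]; push_cast; ring
    rw [Complex.ofReal_pow, hcos, hE2, h1, h3]
    linear_combination (E / 2) * hAB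
  -- integral of cos² * exp over any interval
  have hint : ∀ a b : ℝ, (∫ t in a..b, ((Real.cos (ω * t) ^ 2 : ℝ) : ℂ) *
      Complex.exp (-(Complex.I * (ω : ℂ) * (k : ℂ) * (t : ℝ))))
      = (1/4 : ℂ) * ((Complex.exp (c₁ * b) - Complex.exp (c₁ * a)) / c₁
        + 2 * ((Complex.exp (c₂ * b) - Complex.exp (c₂ * a)) / c₂)
        + (Complex.exp (c₃ * b) - Complex.exp (c₃ * a)) / c₃) := by
    intro a b
    have hci : ∀ c : ℂ, IntervalIntegrable (fun t : ℝ => Complex.exp (c * t)) volume a b :=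
      fun c => (Complex.continuous_exp.comp
        (continuous_const.mul Complex.continuous_ofReal)).intervalIntegrable a b
    rw [integral_congr (g := fun t : ℝ => (1/4 : ℂ) * (Complex.exp (c₁ * t)
        + 2 * Complex.exp (c₂ * t) + Complex.exp (c₃ * t))) (fun t _ => hpt t)]
    rw [intervalIntegral.integral_const_mul]
    rw [intervalIntegral.integral_add (((hci c₁).add ((hci c₂).const_mul 2))) (hci c₃),
        intervalIntegral.integral_add (hci c₁) ((hci c₂).const_mul 2),
        intervalIntegral.integral_const_mul,
        integral_exp_mul_complex hc₁0, integral_exp_mul_complex hc₂0,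
        integral_exp_mul_complex hc₃0]
  -- the integrand
  set f : ℝ → ℂ := fun t => ((Real.cos (ω * t) * |Real.cos (ω * t)| : ℝ) : ℂ) *
      Complex.exp (-(Complex.I * (ω : ℂ) * (k : ℂ) * (t : ℝ))) with hf
  have hfc : Continuous f := by
    apply Continuous.mul
    · exact Complex.continuous_ofReal.comp
        ((Real.continuous_cos.comp (continuous_const.mul continuous_id)).mul
          (Real.continuous_cos.comp (continuous_const.mul continuous_id)).abs)
    · exact Complex.continuous_exp.comp
        (((continuous_const.mul Complex.continuous_ofReal)).neg)
  -- breakpoints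
  have hq1 : ω * (T/4) = Real.pi / 2 := by rw [hω]; field_simp; ring
  have hq3 : ω * (3*T/4) = 3 * (Real.pi / 2) := by rw [hω]; field_simp; ring
  -- sign analysis on the three intervals
  have habs1 : Set.EqOn f (fun t : ℝ => ((Real.cos (ω * t) ^ 2 : ℝ) : ℂ) *
      Complex.exp (-(Complex.I * (ω : ℂ) * (k : ℂ) * (t : ℝ)))) (Set.uIcc 0 (T/4)) := by
    intro t ht
    rw [Set.uIcc_of_le (by linarith : (0:ℝ) ≤ T/4)] at ht
    have hpos : 0 ≤ Real.cos (ω * t) := by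
      apply Real.cos_nonneg_of_mem_Icc
      constructor
      · nlinarith [Real.pi_pos, ht.1, hωpos.le]
      · nlinarith [ht.2, hωpos.le, hq1]
    simp only [hf]
    rw [abs_of_nonneg hpos]
    push_cast
    ring
  have habs2 : Set.EqOn f (fun t : ℝ => -(((Real.cos (ω * t) ^ 2 : ℝ) : ℂ) *
      Complex.exp (-(Complex.I * (ω : ℂ) * (k : ℂ) * (t : ℝ))))) (Set.uIcc (T/4) (3*T/4)) := by
    intro t ht
    rw [Set.uIcc_of_le (by linarith : T/4 ≤ 3*T/4)] at ht
    have hneg : Real.cos (ω * t) ≤ 0 := by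
      apply Real.cos_nonpos_of_pi_div_two_le_of_le
      · nlinarith [ht.1, hωpos.le, hq1]
      · nlinarith [ht.2, hωpos.le, hq3, Real.pi_pos]
    simp only [hf]
    rw [abs_of_nonpos hneg]
    push_cast
    ring
  have habs3 : Set.EqOn f (fun t : ℝ => ((Real.cos (ω * t) ^ 2 : ℝ) : ℂ) *
      Complex.exp (-(Complex.I * (ω : ℂ) * (k : ℂ) * (t : ℝ)))) (Set.uIcc (3*T/4) T) := by
    intro t ht
    rw [Set.uIcc_of_le (by linarith : 3*T/4 ≤ T)] at ht
    have hpos : 0 ≤ Real.cos (ω * t) := by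
      rw [← Real.cos_sub_two_pi]
      apply Real.cos_nonneg_of_mem_Icc
      constructor
      · nlinarith [ht.1, hωpos.le, hq3]
      · nlinarith [ht.2, hωpos.le, hωT, Real.pi_pos]
    simp only [hf]
    rw [abs_of_nonneg hpos]
    push_cast
    ring
  -- special value z
  set z : ℂ := Complex.exp (-(Complex.I * (k : ℂ) * ((Real.pi : ℂ) / 2))) with hzdef
  have hzk : Complex.exp (-(Complex.I * (k : ℂ) * (Real.pi : ℂ))) = -1 := by
    rw [show -(Complex.I * (k : ℂ) * (Real.pi : ℂ))
        = (-(n+1) : ℤ) * (2 * (Real.pi : ℂ) * Complex.I) + (Real.pi : ℂ) * Complex.I from by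
      push_cast [hkn]; ring]
    rw [Complex.exp_add, Complex.exp_int_mul_two_pi_mul_I, one_mul, Complex.exp_pi_mul_I]
  have hz' : z = (-1 : ℂ)^n * -Complex.I := by
    have hsplit : z = Complex.exp ((-n : ℤ) * ((Real.pi : ℂ) * Complex.I)) *
        Complex.exp (-((Real.pi : ℂ) / 2 * Complex.I)) := by
      rw [hzdef, ← Complex.exp_add]; congr 1; push_cast [hkn]; ring
    have h2 : Complex.exp ((-n : ℤ) * ((Real.pi : ℂ) * Complex.I)) = (-1 : ℂ)^n := by
      rw [Complex.exp_int_mul, Complex.exp_pi_mul_I, zpow_neg, ← inv_zpow, inv_neg, inv_one]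
    have h3 : Complex.exp (-((Real.pi : ℂ) / 2 * Complex.I)) = -Complex.I := by
      rw [show -((Real.pi : ℂ) / 2 * Complex.I) = (-((Real.pi : ℂ) / 2)) * Complex.I from by ring,
        Complex.exp_mul_I, Complex.cos_neg, Complex.sin_neg, Complex.cos_pi_div_two,
        Complex.sin_pi_div_two]
      ring
    rw [hsplit, h2, h3]
  have hzI : (-1 : ℂ)^n = Complex.I * z := by
    rw [hz']; linear_combination ((-1 : ℂ)^n) * Complex.I_sq
  -- endpoint values
  have v10 : Complex.exp (c₁ * ((0:ℝ) : ℂ)) = 1 := by norm_num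
  have v20 : Complex.exp (c₂ * ((0:ℝ) : ℂ)) = 1 := by norm_num
  have v30 : Complex.exp (c₃ * ((0:ℝ) : ℂ)) = 1 := by norm_num
  have v11 : Complex.exp (c₁ * ((T/4 : ℝ) : ℂ)) = -z := by
    rw [show c₁ * ((T/4 : ℝ) : ℂ)
        = (Real.pi : ℂ) * Complex.I + -(Complex.I * (k : ℂ) * ((Real.pi : ℂ) / 2)) from by
      rw [hc₁]; push_cast; linear_combination (Complex.I * ((2 : ℂ) - (k:ℂ)) / 4) * hωTC]
    rw [Complex.exp_add, Complex.exp_pi_mul_I, hzdef]; ring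
  have v21 : Complex.exp (c₂ * ((T/4 : ℝ) : ℂ)) = z := by
    rw [hzdef]; congr 1
    rw [hc₂]; push_cast; linear_combination (-(Complex.I * (k:ℂ)) / 4) * hωTC
  have v31 : Complex.exp (c₃ * ((T/4 : ℝ) : ℂ)) = -z := by
    rw [show c₃ * ((T/4 : ℝ) : ℂ)
        = ((-1 : ℤ) * (2 * (Real.pi : ℂ) * Complex.I) + (Real.pi : ℂ) * Complex.I)
          + -(Complex.I * (k : ℂ) * ((Real.pi : ℂ) / 2)) from by
      rw [hc₃]; push_cast; linear_combination (-(Complex.I * ((2 : ℂ) + (k:ℂ))) / 4) * hωTC]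
    rw [Complex.exp_add, Complex.exp_add, Complex.exp_int_mul_two_pi_mul_I, one_mul,
      Complex.exp_pi_mul_I, hzdef]
    ring
  have v12 : Complex.exp (c₁ * ((3*T/4 : ℝ) : ℂ)) = z := by
    rw [show c₁ * ((3*T/4 : ℝ) : ℂ)
        = ((1 : ℤ) * (2 * (Real.pi : ℂ) * Complex.I) + (Real.pi : ℂ) * Complex.I)
          + (-(Complex.I * (k : ℂ) * ((Real.pi : ℂ) / 2)) + -(Complex.I * (k : ℂ) * (Real.pi : ℂ))) from by
      rw [hc₁]; push_cast; linear_combination (Complex.I * ((2 : ℂ) - (k:ℂ)) * 3 / 4) * hωTC]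
    rw [Complex.exp_add, Complex.exp_add, Complex.exp_add, Complex.exp_int_mul_two_pi_mul_I,
      one_mul, Complex.exp_pi_mul_I, hzk, hzdef]
    ring
  have v22 : Complex.exp (c₂ * ((3*T/4 : ℝ) : ℂ)) = -z := by
    rw [show c₂ * ((3*T/4 : ℝ) : ℂ)
        = -(Complex.I * (k : ℂ) * ((Real.pi : ℂ) / 2)) + -(Complex.I * (k : ℂ) * (Real.pi : ℂ)) from by
      rw [hc₂]; push_cast; linear_combination (-(Complex.I * (k:ℂ)) * 3 / 4) * hωTC]
    rw [Complex.exp_add, hzk, hzdef]; ring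
  have v32 : Complex.exp (c₃ * ((3*T/4 : ℝ) : ℂ)) = z := by
    rw [show c₃ * ((3*T/4 : ℝ) : ℂ)
        = ((-2 : ℤ) * (2 * (Real.pi : ℂ) * Complex.I) + (Real.pi : ℂ) * Complex.I)
          + (-(Complex.I * (k : ℂ) * ((Real.pi : ℂ) / 2)) + -(Complex.I * (k : ℂ) * (Real.pi : ℂ))) from by
      rw [hc₃]; push_cast; linear_combination (-(Complex.I * ((2 : ℂ) + (k:ℂ))) * 3 / 4) * hωTC]
    rw [Complex.exp_add, Complex.exp_add, Complex.exp_add, Complex.exp_int_mul_two_pi_mul_I,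
      one_mul, Complex.exp_pi_mul_I, hzk, hzdef]
    ring
  have v13 : Complex.exp (c₁ * ((T : ℝ) : ℂ)) = 1 := by
    rw [show c₁ * ((T : ℝ) : ℂ) = ((2 - k : ℤ)) * (2 * (Real.pi : ℂ) * Complex.I) from by
      rw [hc₁]; push_cast; linear_combination (Complex.I * ((2 : ℂ) - (k:ℂ))) * hωTC]
    exact Complex.exp_int_mul_two_pi_mul_I _
  have v23 : Complex.exp (c₂ * ((T : ℝ) : ℂ)) = 1 := by
    rw [show c₂ * ((T : ℝ) : ℂ) = ((-k : ℤ)) * (2 * (Real.pi : ℂ) * Complex.I) from by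
      rw [hc₂]; push_cast; linear_combination (-(Complex.I * (k:ℂ))) * hωTC]
    exact Complex.exp_int_mul_two_pi_mul_I _
  have v33 : Complex.exp (c₃ * ((T : ℝ) : ℂ)) = 1 := by
    rw [show c₃ * ((T : ℝ) : ℂ) = ((-(2+k) : ℤ)) * (2 * (Real.pi : ℂ) * Complex.I) from by
      rw [hc₃]; push_cast; linear_combination (-(Complex.I * ((2:ℂ) + (k:ℂ)))) * hωTC]
    exact Complex.exp_int_mul_two_pi_mul_I _
  -- split the integral and evaluate
  have hdiv : ∀ w u : ℂ, u ≠ 0 → w / (Complex.I * u) = -Complex.I * w / u := by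
    intro w u hu
    rw [div_eq_div_iff (mul_ne_zero Complex.I_ne_zero hu) hu]
    linear_combination (w * u) * Complex.I_sq
  have hd1 : ∀ w : ℂ, w / (Complex.I * (((2:ℂ) - (k:ℂ)) * (ω:ℂ)))
      = -Complex.I * w / (((2:ℂ) - (k:ℂ)) * (ω:ℂ)) :=
    fun w => hdiv w _ (mul_ne_zero h2mk hωC)
  have hd2 : ∀ w : ℂ, w / (Complex.I * ((-(k:ℂ)) * (ω:ℂ)))
      = -Complex.I * w / ((-(k:ℂ)) * (ω:ℂ)) :=
    fun w => hdiv w _ (mul_ne_zero (neg_ne_zero.mpr hk0) hωC)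
  have hd3 : ∀ w : ℂ, w / (Complex.I * ((-((2:ℂ) + (k:ℂ))) * (ω:ℂ)))
      = -Complex.I * w / ((-((2:ℂ) + (k:ℂ))) * (ω:ℂ)) :=
    fun w => hdiv w _ (mul_ne_zero (neg_ne_zero.mpr h2pk) hωC)
  have h4k : (4 * (k:ℂ) - (k:ℂ)^3) ≠ 0 := by
    have hfac : 4 * (k:ℂ) - (k:ℂ)^3 = (k:ℂ) * (((2:ℂ) - k) * ((2:ℂ) + k)) := by ring
    rw [hfac]; exact mul_ne_zero hk0 (mul_ne_zero h2mk h2pk)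
  have hi1 : IntervalIntegrable f volume 0 (T/4) := hfc.intervalIntegrable _ _
  have hi2 : IntervalIntegrable f volume (T/4) (3*T/4) := hfc.intervalIntegrable _ _
  have hi3 : IntervalIntegrable f volume (3*T/4) T := hfc.intervalIntegrable _ _
  have hsplit : (∫ t in (0:ℝ)..T, f t) = (∫ t in (0:ℝ)..(T/4), f t)
      + ((∫ t in (T/4:ℝ)..(3*T/4), f t) + (∫ t in (3*T/4:ℝ)..T, f t)) := by
    rw [integral_add_adjacent_intervals hi2 hi3,
      integral_add_adjacent_intervals hi1 (hi2.trans hi3)]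
  have hv1 : c₁⁻¹ = -Complex.I * (T:ℂ) * ((((2:ℂ) - (k:ℂ)) * (2 * (Real.pi:ℂ)))⁻¹) := by
    rw [hc₁, hωCval]
    apply inv_eq_of_mul_eq_one_right
    field_simp
    linear_combination (-1 : ℂ) * Complex.I_sq
  have hv2 : c₂⁻¹ = Complex.I * (T:ℂ) * ((((k:ℂ)) * (2 * (Real.pi:ℂ)))⁻¹) := by
    rw [hc₂, hωCval]
    apply inv_eq_of_mul_eq_one_right
    field_simp
    linear_combination (-1 : ℂ) * Complex.I_sq
  have hv3 : c₃⁻¹ = Complex.I * (T:ℂ) * ((((2:ℂ) + (k:ℂ)) * (2 * (Real.pi:ℂ)))⁻¹) := by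
    rw [hc₃, hωCval]
    apply inv_eq_of_mul_eq_one_right
    field_simp
    linear_combination (-1 : ℂ) * Complex.I_sq
  have hw1 : ∀ w : ℂ, w / c₁ = w * (-Complex.I * (T:ℂ) * ((((2:ℂ) - (k:ℂ)) * (2 * (Real.pi:ℂ)))⁻¹)) :=
    fun w => by rw [div_eq_mul_inv, hv1]
  have hw2 : ∀ w : ℂ, w / c₂ = w * (Complex.I * (T:ℂ) * ((((k:ℂ)) * (2 * (Real.pi:ℂ)))⁻¹)) :=
    fun w => by rw [div_eq_mul_inv, hv2]
  have hw3 : ∀ w : ℂ, w / c₃ = w * (Complex.I * (T:ℂ) * ((((2:ℂ) + (k:ℂ)) * (2 * (Real.pi:ℂ)))⁻¹)) :=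
    fun w => by rw [div_eq_mul_inv, hv3]
  rw [hsplit, integral_congr habs1, integral_congr habs2, integral_congr habs3,
    intervalIntegral.integral_neg, hint, hint, hint,
    v10, v20, v30, v11, v21, v31, v12, v22, v32, v13, v23, v33, hzI]
  simp only [hw1, hw2, hw3]
  have hD : (T:ℂ) * (k:ℂ) * (Real.pi:ℂ) ^ 3 * 128 - (T:ℂ) * (k:ℂ) ^ 3 * (Real.pi:ℂ) ^ 3 * 32 ≠ 0 := by
    have he : (T:ℂ) * (k:ℂ) * (Real.pi:ℂ) ^ 3 * 128 - (T:ℂ) * (k:ℂ) ^ 3 * (Real.pi:ℂ) ^ 3 * 32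
        = 32 * ((T:ℂ) * (Real.pi:ℂ)^3) * (4 * (k:ℂ) - (k:ℂ)^3) := by ring
    rw [he]
    exact mul_ne_zero (mul_ne_zero (by norm_num) (mul_ne_zero hTC (pow_ne_zero _ hπC))) h4k
  have h2π : (2 : ℂ) * (Real.pi:ℂ) ≠ 0 := mul_ne_zero two_ne_zero hπC
  field_simp
  rw [eq_div_iff (by rw [show (4:ℂ) - (k:ℂ)^2 = (2 - k) * (2 + k) by ring]; exact mul_ne_zero h2mk h2pk)]
  ring

/-- Fourier coefficients of `t ↦ cos(ωt)|cos(ωt)|` on `ℝ/TZ`: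
they vanish for even `k` and equal `4(-1)^n/((4k - k³)π)` for odd `k = 2n+1`. -/
theorem fourier_coeff_cos_abs_cos (T : ℝ) (hT : 0 < T) :
    let ω : ℝ := 2 * Real.pi / T
    let c : ℤ → ℂ := fun k =>
      (1 / T : ℂ) * ∫ t in (0:ℝ)..T,
        ((Real.cos (ω * t) * |Real.cos (ω * t)| : ℝ) : ℂ) *
          Complex.exp (-(Complex.I * ω * k * t))
    (∀ k : ℤ, Even k → c k = 0) ∧
    (∀ k n : ℤ, k = 2 * n + 1 →
      c k = 4 * (-1 : ℂ)^n / ((4 * (k : ℂ) - (k : ℂ)^3) * (Real.pi : ℂ))) := by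
  intro ω c
  exact ⟨fun k hk => aux_even T hT k hk, fun k n hkn => aux_odd T hT k n hkn⟩
end

section
/- Let (v_n) be a sequence in L^{4/3}(X) (X a measure space) such that J(v_n) → c in ℝ and J'(v_n)[v_n] = o(‖v_n‖_{4/3}), where J(v) = ∫ (3/4)|v|^{4/3} - (1/2) Kv·v dμ for a bounded symmetric linear operator K : L^{4/3} → L^4. Then (v_n) is bounded in L^{4/3} and ‖v_n‖_{4/3}^{4/3} → 4c. -/
open MeasureTheory Filter Topology ENNReal

instance fact_one_le_four_thirds : Fact ((1 : ℝ≥0∞) ≤ 4/3) :=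
  ⟨by rw [ENNReal.le_div_iff_mul_le (by norm_num) (by norm_num)]; norm_num⟩

instance fact_one_le_four : Fact ((1 : ℝ≥0∞) ≤ 4) := ⟨by norm_num⟩

lemma norm_rpow_four_thirds_eq {X : Type*} [MeasurableSpace X] (μ : Measure X)
    (u : Lp ℝ (4/3 : ℝ≥0∞) μ) :
    ‖u‖ ^ ((4:ℝ)/3) = ∫ x, |(u : X → ℝ) x| ^ ((4:ℝ)/3) ∂μ := by
  have hm : MemLp (u : X → ℝ) (4/3) μ := Lp.memLp u
  have ht : ((4:ℝ≥0∞)/3).toReal = 4/3 := by rw [ENNReal.toReal_div]; norm_num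
  have h := hm.eLpNorm_eq_integral_rpow_norm (by norm_num) (by simp [ENNReal.div_eq_top])
  rw [Lp.norm_def, h, ht, ENNReal.toReal_ofReal (by positivity)]
  rw [← Real.rpow_mul (integral_nonneg fun x => by positivity)]
  norm_num

lemma bound_of_rpow_le {x C : ℝ} (hx : 0 ≤ x) (hC : 1 ≤ C)
    (h : x ^ ((4:ℝ)/3) ≤ C + C * x) : x ≤ (2*C)^3 := by
  by_contra hlt
  push_neg at hlt
  have h2C : (1:ℝ) ≤ 2*C := by linarith
  have hx8 : (1:ℝ) ≤ x := le_trans (by nlinarith [sq_nonneg (2*C)]) hlt.le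
  have hx0 : (0:ℝ) < x := by linarith
  have hcube : ((2*C)^3 : ℝ) ^ ((1:ℝ)/3) = 2*C := by
    rw [← Real.rpow_natCast (2*C) 3, ← Real.rpow_mul (by linarith)]
    norm_num
  have h1 : 2*C < x ^ ((1:ℝ)/3) := by
    rw [← hcube]
    exact Real.rpow_lt_rpow (by positivity) hlt (by norm_num)
  have hsplit : x ^ ((4:ℝ)/3) = x * x ^ ((1:ℝ)/3) := by
    rw [← Real.rpow_one_add' hx0.le (by norm_num)]
    norm_num
  have : x * (2*C) < x * x ^ ((1:ℝ)/3) := by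
    exact mul_lt_mul_of_pos_left h1 hx0
  nlinarith [h, hsplit]

/-- Palais-Smale-type sequences for the dual functional
`J(v) = ∫ (3/4)|v|^{4/3} - (1/2)Kv·v` are bounded in `L^{4/3}` and satisfy
`‖v_n‖_{4/3}^{4/3} → 4c`. -/
theorem palais_smale_bounded
    {X : Type*} [MeasurableSpace X] (μ : Measure X) [SigmaFinite μ]
    (K : Lp ℝ (4/3 : ℝ≥0∞) μ →L[ℝ] Lp ℝ 4 μ)
    (hKsymm : ∀ v w : Lp ℝ (4/3 : ℝ≥0∞) μ,
      ∫ x, (K v : X → ℝ) x * (w : X → ℝ) x ∂μ = ∫ x, (K w : X → ℝ) x * (v : X → ℝ) x ∂μ)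
    (J : Lp ℝ (4/3 : ℝ≥0∞) μ → ℝ)
    (hJ : ∀ v, J v = (3/4) * ∫ x, |(v : X → ℝ) x| ^ ((4:ℝ)/3) ∂μ
      - (1/2) * ∫ x, (K v : X → ℝ) x * (v : X → ℝ) x ∂μ)
    (J'vv : Lp ℝ (4/3 : ℝ≥0∞) μ → ℝ)
    (hJ' : ∀ v, J'vv v = (∫ x, |(v : X → ℝ) x| ^ ((4:ℝ)/3) ∂μ)
      - ∫ x, (K v : X → ℝ) x * (v : X → ℝ) x ∂μ)
    (v : ℕ → Lp ℝ (4/3 : ℝ≥0∞) μ) (c : ℝ)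
    (hc : Tendsto (fun n => J (v n)) atTop (𝓝 c))
    (hps : Tendsto (fun n => |J'vv (v n)| / (1 + ‖v n‖)) atTop (𝓝 0)) :
    (∃ M : ℝ, ∀ n, ‖v n‖ ≤ M) ∧
      Tendsto (fun n => ‖v n‖ ^ ((4:ℝ)/3)) atTop (𝓝 (4 * c)) := by
  set ε : ℕ → ℝ := fun n => |J'vv (v n)| / (1 + ‖v n‖) with hε
  have hpos : ∀ n, (0:ℝ) < 1 + ‖v n‖ := fun n => by positivity
  -- key identity: ‖v n‖^{4/3} = 4 J(v n) - 2 J'vv(v n)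
  have key : ∀ n, ‖v n‖ ^ ((4:ℝ)/3) = 4 * J (v n) - 2 * J'vv (v n) := by
    intro n
    rw [norm_rpow_four_thirds_eq, hJ, hJ']
    ring
  -- bounds
  obtain ⟨CJ, hCJ⟩ : ∃ CJ, ∀ n, |J (v n)| ≤ CJ := by
    obtain ⟨CJ, hCJ⟩ := hc.abs.bddAbove_range
    exact ⟨CJ, fun n => hCJ ⟨n, rfl⟩⟩
  obtain ⟨Ce, hCe⟩ : ∃ Ce, ∀ n, ε n ≤ Ce := by
    obtain ⟨Ce, hCe⟩ := hps.bddAbove_range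
    exact ⟨Ce, fun n => hCe ⟨n, rfl⟩⟩
  have hεnn : ∀ n, 0 ≤ ε n := fun n => div_nonneg (abs_nonneg _) (hpos n).le
  have hCe0 : 0 ≤ Ce := le_trans (hεnn 0) (hCe 0)
  have hεeq : ∀ n, |J'vv (v n)| = ε n * (1 + ‖v n‖) := fun n => by
    rw [hε]; field_simp
  have hJ'b : ∀ n, |J'vv (v n)| ≤ Ce * (1 + ‖v n‖) := fun n => by
    rw [hεeq n]
    exact mul_le_mul_of_nonneg_right (hCe n) (hpos n).le
  set C : ℝ := max (4*CJ + 2*Ce + 1) (2*Ce + 1) with hCdef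
  have hC1 : 1 ≤ C := le_trans (by linarith) (le_max_right _ _)
  have hbd : ∀ n, ‖v n‖ ≤ (2*C)^3 := by
    intro n
    refine bound_of_rpow_le (norm_nonneg _) hC1 ?_
    have h1 : |J (v n)| ≤ CJ := hCJ n
    have h2 := hJ'b n
    have h3 := abs_le.mp h1
    have h4 := abs_le.mp h2  -- wrong, h2 is |J'| ≤ ...
    rw [key n]
    have hx : 0 ≤ ‖v n‖ := norm_nonneg _
    have hle1 : 4*CJ + 2*Ce + 1 ≤ C := le_max_left _ _
    have hle2 : 2*Ce + 1 ≤ C := le_max_right _ _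
    have := neg_abs_le (J'vv (v n))
    nlinarith [abs_le.mp (hJ'b n)]
  refine ⟨⟨(2*C)^3, hbd⟩, ?_⟩
  have hM1 : ∀ n, 1 + ‖v n‖ ≤ 1 + (2*C)^3 := fun n => by linarith [hbd n]
  have h0 : Tendsto (fun n => J'vv (v n)) atTop (𝓝 0) := by
    rw [tendsto_zero_iff_abs_tendsto_zero]
    refine squeeze_zero (fun n => abs_nonneg _) (fun n => ?_)
      (by simpa using hps.mul_const (1 + (2*C)^3))
    exact (hεeq n).le.trans (mul_le_mul_of_nonneg_left (hM1 n) (hεnn n))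
  have := ((hc.const_mul 4).sub (h0.const_mul 2))
  simp only [mul_zero, sub_zero] at this
  exact this.congr fun n => (key n).symm
end
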